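/- Let R be a commutative Noetherian local ring and J ⊆ I ideals with x1,...,xs a generating sequence of J such that x1,...,xs is a regular sequence. Set J_i = (x1,...,x_i). If for all i = 1,...,s-1 and all n ≥ 1 one has J_i ∩ I^n = J_i * I^(n-1), then for all i = 1,...,s and all n ≥ 2, ((J_{i-1}*I^(n-1)) : x_i) ∩ I^(n-1) = J_{i-1}*I^(n-2). -/

import Mathlib

/-- The ideal generated by the first `i` elements of the sequence `x`. -/
def firstIdeal {R : Type*} [CommRing R] {s : ℕ} (x : Fin s → R) (i : ℕ) : Ideal R :=
  Ideal.span (x '' {j : Fin s | (j : ℕ) < i})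

/-- `R` Noetherian local, `J ⊆ I`, `x1,…,xs` a regular sequence
generating `J`; if `J_i ∩ I^n = J_i*I^(n-1)` for `1 ≤ i ≤ s-1`, `n ≥ 1`, then
`((J_{i-1}*I^(n-1)) : x_i) ∩ I^(n-1) = J_{i-1}*I^(n-2)` for `1 ≤ i ≤ s`, `n ≥ 2`. -/
theorem stmt_8 {R : Type*} [CommRing R] [IsNoetherianRing R] [IsLocalRing R]
    (I J : Ideal R) (hJI : J ≤ I) (s : ℕ) (x : Fin s → R)
    (hgen : J = Ideal.span (Set.range x))
    (hreg : ∀ i : Fin s, ∀ r : R,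
      r * x i ∈ firstIdeal x i → r ∈ firstIdeal x i)
    (hJR : J ≠ ⊤)
    (hVV : ∀ i : ℕ, 1 ≤ i → i ≤ s - 1 → ∀ n : ℕ, 1 ≤ n →
      firstIdeal x i ⊓ I ^ n = firstIdeal x i * I ^ (n - 1)) :
    ∀ i : ℕ, ∀ hi1 : 1 ≤ i, ∀ hi2 : i ≤ s, ∀ n : ℕ, 2 ≤ n →
      (firstIdeal x (i - 1) * I ^ (n - 1)).colon
          (Ideal.span {x ⟨i - 1, by omega⟩}) ⊓ I ^ (n - 1) =
        firstIdeal x (i - 1) * I ^ (n - 2) := by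
  intro i hi1 hi2 n hn
  have hxI : ∀ j : Fin s, x j ∈ I := fun j => hJI (hgen ▸ Ideal.subset_span ⟨j, rfl⟩)
  have hfirst_le : ∀ k, firstIdeal x k ≤ I := fun k =>
    le_trans (Ideal.span_mono (Set.image_subset_range x _)) (le_trans (le_of_eq hgen.symm) hJI)
  have hpow : I ^ (n - 2) * I = I ^ (n - 1) := by
    rw [← pow_succ]; congr 1; omega
  apply le_antisymm
  · intro a ha
    rw [Ideal.mem_inf] at ha
    obtain ⟨hcol, haI⟩ := ha
    rw [Ideal.mem_colon_span_singleton] at hcol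
    have haJ : a ∈ firstIdeal x (i - 1) := by
      have := hreg ⟨i - 1, by omega⟩ a (Ideal.mul_le_left hcol)
      simpa using this
    rcases Nat.lt_or_ge i 2 with h1 | h2
    · -- i = 1, firstIdeal x 0 = ⊥
      have hi0 : i - 1 = 0 := by omega
      have hbot : firstIdeal x (i - 1) = ⊥ := by
        rw [hi0]
        have : {j : Fin s | (j : ℕ) < 0} = ∅ := by
          ext j; simp
        simp [firstIdeal, this]
      rw [hbot] at haJ
      simp only [Ideal.mem_bot] at haJ
      simp [hbot, haJ]
    · have hVVeq := hVV (i - 1) (by omega) (by omega) (n - 1) (by omega)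
      have hnn : n - 1 - 1 = n - 2 := by omega
      rw [hnn] at hVVeq
      rw [← hVVeq]
      exact Ideal.mem_inf.mpr ⟨haJ, haI⟩
  · intro a ha
    rw [Ideal.mem_inf]
    constructor
    · rw [Ideal.mem_colon_span_singleton]
      have : a * x ⟨i - 1, by omega⟩ ∈
          firstIdeal x (i - 1) * I ^ (n - 2) * I :=
        Ideal.mul_mem_mul ha (hxI _)
      rwa [mul_assoc, hpow] at this
    · have : firstIdeal x (i - 1) * I ^ (n - 2) ≤ I * I ^ (n - 2) :=
        Ideal.mul_mono (hfirst_le _) le_rfl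
      have h2 : I * I ^ (n - 2) = I ^ (n - 1) := by
        rw [mul_comm]; exact hpow
      exact h2 ▸ this ha
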